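/- Let n ≥ 2 and let X be an n-pseudomanifold with H^{n−1}(X; Z/2) = 0. Then h^{n−1}(X) = 2 / diam(G_X), where diam(G_X) is the diameter of the flip graph of X. -/

import Mathlib

open Finset

section Simplicial

variable {V : Type*} [DecidableEq V]

/-- `X` is a finite abstract simplicial complex: a finite family of nonempty finite sets
closed under taking nonempty subsets. -/
def IsComplex (X : Finset (Finset V)) : Prop :=
  (∀ σ ∈ X, σ.Nonempty) ∧ ∀ σ ∈ X, ∀ τ ⊆ σ, τ.Nonempty → τ ∈ X

/-- The `k`-dimensional faces of `X` (faces of cardinality `k+1`). -/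
def faces (X : Finset (Finset V)) (k : ℕ) : Finset (Finset V) :=
  X.filter fun σ => σ.card = k + 1

/-- The support of a `k`-cochain. -/
def csupp (X : Finset (Finset V)) (k : ℕ) (φ : Finset V → ZMod 2) : Finset (Finset V) :=
  (faces X k).filter fun σ => φ σ ≠ 0

/-- The norm of a `k`-cochain. -/
def cnorm (X : Finset (Finset V)) (k : ℕ) (φ : Finset V → ZMod 2) : ℕ :=
  (csupp X k φ).card

/-- The coboundary of a `k`-cochain, as a `(k+1)`-cochain. -/
def cob (X : Finset (Finset V)) (k : ℕ) (φ : Finset V → ZMod 2) : Finset V → ZMod 2 :=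
  fun τ => ∑ σ ∈ (faces X k).filter (fun σ => σ ⊆ τ), φ σ

/-- The cosystolic norm of a `k`-cochain, with the reduced convention at `k = 0`. -/
noncomputable def cosys (X : Finset (Finset V)) (k : ℕ) (φ : Finset V → ZMod 2) : ℕ :=
  if k = 0 then
    min (cnorm X 0 φ) (cnorm X 0 fun σ => 1 + φ σ)
  else
    sInf {m | ∃ ψ : Finset V → ZMod 2, m = cnorm X k fun τ => φ τ + cob X (k - 1) ψ τ}

/-- The `k`-th (coboundary) Cheeger constant, valued in `ℝ≥0∞` (`⊤` if no cochain has
positive cosystolic norm). -/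
noncomputable def cheeger (X : Finset (Finset V)) (k : ℕ) : ENNReal :=
  sInf {r : ENNReal | ∃ φ : Finset V → ZMod 2, 0 < cosys X k φ ∧
    r = (cnorm X (k + 1) (cob X k φ) : ENNReal) / (cosys X k φ : ENNReal)}

/-- The boundary of a `k`-chain, as a `(k-1)`-chain. -/
def bdry (X : Finset (Finset V)) (k : ℕ) (c : Finset V → ZMod 2) : Finset V → ZMod 2 :=
  fun τ => ∑ σ ∈ (faces X k).filter (fun σ => τ ⊆ σ), c σ

/-- A `k`-cycle, with the reduced convention at `k = 0`. -/
def IsCycle (X : Finset (Finset V)) (k : ℕ) (c : Finset V → ZMod 2) : Prop :=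
  if k = 0 then ∑ σ ∈ faces X 0, c σ = 0
  else ∀ τ ∈ faces X (k - 1), bdry X k c τ = 0

/-- Evaluation of a `k`-cochain on a `k`-chain. -/
def eval (X : Finset (Finset V)) (k : ℕ) (φ c : Finset V → ZMod 2) : ZMod 2 :=
  ∑ σ ∈ faces X k, φ σ * c σ

end Simplicial

/-- The flip graph of an `n`-dimensional complex: vertices are the `n`-faces, two being
adjacent when they share a common `(n-1)`-face. -/
def flipGraph {V : Type*} [DecidableEq V] (X : Finset (Finset V)) (n : ℕ) :
    SimpleGraph {σ : Finset V // σ ∈ faces X n} where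
  Adj σ τ := σ ≠ τ ∧ (σ.1 ∩ τ.1).card = n
  symm := by
    constructor
    rintro σ τ ⟨hne, h⟩
    exact ⟨hne.symm, by rwa [Finset.inter_comm]⟩
  loopless := by constructor; rintro σ ⟨hne, -⟩; exact hne rfl

/-- `X` is an `n`-pseudomanifold: a pure `n`-dimensional finite complex in which every
`(n-1)`-face lies in exactly two `n`-faces, and whose flip graph is connected. -/
def IsPseudomanifold {V : Type*} [DecidableEq V] (X : Finset (Finset V)) (n : ℕ) : Prop :=
  IsComplex X ∧ (∀ σ ∈ X, ∃ τ ∈ faces X n, σ ⊆ τ) ∧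
    (∀ τ ∈ faces X (n - 1), ((faces X n).filter fun σ => τ ⊆ σ).card = 2) ∧
    (flipGraph X n).Connected

section Aux
variable {V : Type*} [DecidableEq V] {X : Finset (Finset V)} {m : ℕ}

lemma mem_faces' {σ : Finset V} {k : ℕ} : σ ∈ faces X k ↔ σ ∈ X ∧ σ.card = k + 1 :=
  Finset.mem_filter

lemma face_down (hX : IsComplex X) {σ τ : Finset V} {k j : ℕ} (hσ : σ ∈ faces X k)
    (hτ : τ ⊆ σ) (hcard : τ.card = j + 1) : τ ∈ faces X j := by
  rcases mem_faces'.mp hσ with ⟨h1, _⟩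
  refine mem_faces'.mpr ⟨hX.2 σ h1 τ hτ ?_, hcard⟩
  rw [← Finset.card_pos, hcard]; omega

lemma coface_two (hpm : IsPseudomanifold X (m+2)) {τ : Finset V} (hτ : τ ∈ faces X (m+1)) :
    ∃ σ₁ σ₂, σ₁ ∈ faces X (m+2) ∧ σ₂ ∈ faces X (m+2) ∧ σ₁ ≠ σ₂ ∧ τ ⊆ σ₁ ∧ τ ⊆ σ₂ ∧
      ∀ σ ∈ faces X (m+2), τ ⊆ σ → σ = σ₁ ∨ σ = σ₂ := by
  have h := hpm.2.2.1 τ hτ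
  rw [Finset.card_eq_two] at h
  obtain ⟨σ₁, σ₂, hne, hset⟩ := h
  have h1 : σ₁ ∈ (faces X (m+2)).filter (fun σ => τ ⊆ σ) := by rw [hset]; simp
  have h2 : σ₂ ∈ (faces X (m+2)).filter (fun σ => τ ⊆ σ) := by rw [hset]; simp
  rw [Finset.mem_filter] at h1 h2
  refine ⟨σ₁, σ₂, h1.1, h2.1, hne, h1.2, h2.2, fun σ hσ hτσ => ?_⟩
  have : σ ∈ (faces X (m+2)).filter (fun σ => τ ⊆ σ) := Finset.mem_filter.mpr ⟨hσ, hτσ⟩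
  rw [hset] at this; simpa using this

lemma inter_card (hτ : τ ∈ faces X (m+1)) {σ₁ σ₂ : Finset V} (hne : σ₁ ≠ σ₂)
    (h1 : σ₁ ∈ faces X (m+2)) (h2 : σ₂ ∈ faces X (m+2))
    (hs1 : τ ⊆ σ₁) (hs2 : τ ⊆ σ₂) : τ = σ₁ ∩ σ₂ ∧ (σ₁ ∩ σ₂).card = m + 2 := by
  have hc1 : σ₁.card = m + 3 := mem_faces'.mp h1 |>.2
  have hc2 : σ₂.card = m + 3 := mem_faces'.mp h2 |>.2
  have hcτ : τ.card = m + 2 := mem_faces'.mp hτ |>.2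
  have hsub : τ ⊆ σ₁ ∩ σ₂ := Finset.subset_inter hs1 hs2
  have hle : (σ₁ ∩ σ₂).card ≤ m + 2 := by
    by_contra hlt
    push_neg at hlt
    have e1 : σ₁ ∩ σ₂ = σ₁ := Finset.eq_of_subset_of_card_le Finset.inter_subset_left (by omega)
    have e2 : σ₁ ∩ σ₂ = σ₂ := Finset.eq_of_subset_of_card_le Finset.inter_subset_right (by omega)
    exact hne (e1 ▸ e2)
  have := Finset.card_le_card hsub
  have heq : τ = σ₁ ∩ σ₂ := Finset.eq_of_subset_of_card_le hsub (by omega)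
  exact ⟨heq, by omega⟩

-- adjacent vertices give a face with exactly those two cofaces
lemma adj_face (hpm : IsPseudomanifold X (m+2)) {u w : Finset V}
    (hu : u ∈ faces X (m+2)) (hw : w ∈ faces X (m+2)) (hne : u ≠ w)
    (hcard : (u ∩ w).card = m + 2) :
    (u ∩ w) ∈ faces X (m+1) ∧
      ∀ σ ∈ faces X (m+2), u ∩ w ⊆ σ → σ = u ∨ σ = w := by
  have hface : (u ∩ w) ∈ faces X (m+1) :=
    face_down hpm.1 hu Finset.inter_subset_left hcard
  refine ⟨hface, fun σ hσ hsub => ?_⟩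
  obtain ⟨σ₁, σ₂, hσ₁, hσ₂, hne', hs1, hs2, huniq⟩ := coface_two hpm hface
  have hu' := huniq u hu Finset.inter_subset_left
  have hw' := huniq w hw Finset.inter_subset_right
  have := huniq σ hσ hsub
  rcases hu' with rfl | rfl <;> rcases hw' with rfl | rfl <;> tauto

end Aux
section Aux2
variable {V : Type*} [DecidableEq V] {X : Finset (Finset V)} {m : ℕ}
set_option linter.unusedSectionVars false

lemma cob_add (k : ℕ) (φ ψ : Finset V → ZMod 2) (τ : Finset V) :
    cob X k (fun ρ => φ ρ + ψ ρ) τ = cob X k φ τ + cob X k ψ τ := by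
  simp [cob, Finset.sum_add_distrib]

lemma cob_zero (k : ℕ) (τ : Finset V) : cob X k (fun _ => (0 : ZMod 2)) τ = 0 := by
  simp [cob]

lemma csupp_add_subset (k : ℕ) (φ ψ : Finset V → ZMod 2) :
    csupp X k (fun ρ => φ ρ + ψ ρ) ⊆ csupp X k φ ∪ csupp X k ψ := by
  intro ρ hρ
  rw [csupp, Finset.mem_filter] at hρ
  simp only [Finset.mem_union, csupp, Finset.mem_filter]
  by_contra h
  push_neg at h
  have h1 := h.1 hρ.1
  have h2 := h.2 hρ.1
  exact hρ.2 (by rw [h1, h2, add_zero])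

lemma cnorm_add_le (k : ℕ) (φ ψ : Finset V → ZMod 2) :
    cnorm X k (fun ρ => φ ρ + ψ ρ) ≤ cnorm X k φ + cnorm X k ψ :=
  le_trans (Finset.card_le_card (csupp_add_subset k φ ψ)) (Finset.card_union_le _ _)

lemma cnorm_congr (k : ℕ) {φ ψ : Finset V → ZMod 2}
    (h : ∀ σ ∈ faces X k, φ σ = ψ σ) : cnorm X k φ = cnorm X k ψ := by
  unfold cnorm csupp
  congr 1
  apply Finset.filter_congr
  intro σ hσ
  rw [h σ hσ]

lemma cob_indicator (hpm : IsPseudomanifold X (m+2)) {τ : Finset V} (hτ : τ ∈ faces X (m+1))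
    {σ₁ σ₂ : Finset V} (hne : σ₁ ≠ σ₂)
    (h1 : σ₁ ∈ faces X (m+2)) (h2 : σ₂ ∈ faces X (m+2)) (hs1 : τ ⊆ σ₁) (hs2 : τ ⊆ σ₂)
    {σ : Finset V} (hσ : σ ∈ faces X (m+2)) :
    cob X (m+1) (fun ρ => if ρ = τ then 1 else 0) σ
      = (if σ = σ₁ then 1 else 0) + (if σ = σ₂ then 1 else 0) := by
  obtain ⟨t₁, t₂, ht₁, ht₂, htne, hts1, hts2, huniq⟩ := coface_two hpm hτ
  have key : ∀ σ' ∈ faces X (m+2), (τ ⊆ σ' ↔ (σ' = σ₁ ∨ σ' = σ₂)) := by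
    intro σ' hσ'
    constructor
    · intro hss
      have ha := huniq σ' hσ' hss
      have hb := huniq σ₁ h1 hs1
      have hc := huniq σ₂ h2 hs2
      rcases hb with rfl | rfl <;> rcases hc with rfl | rfl <;> tauto
    · rintro (rfl | rfl) <;> assumption
  have hsum : cob X (m+1) (fun ρ => if ρ = τ then 1 else 0) σ = if τ ⊆ σ then 1 else 0 := by
    rw [cob, Finset.sum_ite_eq']
    simp [Finset.mem_filter, hτ]
  rw [hsum]
  by_cases hss : τ ⊆ σ
  · rw [if_pos hss]
    rcases (key σ hσ).mp hss with rfl | rfl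
    · rw [if_pos rfl, if_neg hne, add_zero]
    · rw [if_neg (Ne.symm hne), if_pos rfl, zero_add]
  · rw [if_neg hss]
    have h1' : σ ≠ σ₁ := fun e => hss (by rw [e]; exact hs1)
    have h2' : σ ≠ σ₂ := fun e => hss (by rw [e]; exact hs2)
    rw [if_neg h1', if_neg h2', add_zero]

end Aux2
section Aux3
variable {V : Type*} [DecidableEq V] {X : Finset (Finset V)} {m : ℕ}
set_option linter.unusedSectionVars false

lemma two_nsmul_zmod2 (x : ZMod 2) {c : ℕ} (hc : c = 0 ∨ c = 2) : c • x = 0 := by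
  rcases hc with rfl | rfl
  · simp
  · rw [show (2:ℕ) • x = x + x by rw [two_nsmul]]
    exact CharTwo.add_self_eq_zero x

lemma cofaces_eq (hX : IsComplex X) {σ ρ : Finset V} (hσ : σ ∈ faces X (m+2))
    (hρ : ρ ∈ faces X m) (hss : ρ ⊆ σ) :
    ((faces X (m+1)).filter (fun τ => τ ⊆ σ)).filter (fun τ => ρ ⊆ τ)
      = (σ \ ρ).image σ.erase := by
  have hcσ : σ.card = m + 3 := (mem_faces'.mp hσ).2
  have hcρ : ρ.card = m + 1 := (mem_faces'.mp hρ).2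
  ext τ
  simp only [Finset.mem_filter, Finset.mem_image, Finset.mem_sdiff]
  constructor
  · rintro ⟨⟨hτf, hτσ⟩, hρτ⟩
    have hcτ : τ.card = m + 2 := (mem_faces'.mp hτf).2
    have hcd : (σ \ τ).card = 1 := by
      rw [Finset.card_sdiff_of_subset hτσ]; omega
    obtain ⟨x, hx⟩ := Finset.card_eq_one.mp hcd
    have hxσ : x ∈ σ ∧ x ∉ τ := by
      have : x ∈ σ \ τ := by rw [hx]; exact Finset.mem_singleton_self x
      exact ⟨(Finset.mem_sdiff.mp this).1, (Finset.mem_sdiff.mp this).2⟩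
    refine ⟨x, ⟨hxσ.1, fun hxρ => hxσ.2 (hρτ hxρ)⟩, ?_⟩
    apply Finset.eq_of_subset_of_card_le
    · intro y hy
      rw [Finset.mem_erase] at hy
      by_contra hyn
      have : y ∈ σ \ τ := Finset.mem_sdiff.mpr ⟨hy.2, hyn⟩
      rw [hx, Finset.mem_singleton] at this
      exact hy.1 this
    · rw [Finset.card_erase_of_mem hxσ.1]; omega
  · rintro ⟨x, ⟨hxσ, hxρ⟩, rfl⟩
    have hsub : σ.erase x ⊆ σ := Finset.erase_subset x σ
    have hcard : (σ.erase x).card = m + 2 := by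
      rw [Finset.card_erase_of_mem hxσ]; omega
    exact ⟨⟨face_down hX hσ hsub hcard, hsub⟩,
      fun y hy => Finset.mem_erase.mpr ⟨fun e => hxρ (e ▸ hy), hss hy⟩⟩

lemma cob_cob (hpm : IsPseudomanifold X (m+2)) (ψ : Finset V → ZMod 2)
    {σ : Finset V} (hσ : σ ∈ faces X (m+2)) :
    cob X (m+1) (cob X m ψ) σ = 0 := by
  rw [cob]
  simp only [cob]
  rw [Finset.sum_comm' (t' := faces X m)
    (s' := fun ρ => ((faces X (m+1)).filter (fun τ => τ ⊆ σ)).filter (fun τ => ρ ⊆ τ)) ?hcomm]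
  case hcomm =>
    intro τ ρ
    simp only [Finset.mem_filter]
    tauto
  apply Finset.sum_eq_zero
  intro ρ hρ
  rw [Finset.sum_const]
  apply two_nsmul_zmod2
  by_cases hss : ρ ⊆ σ
  · right
    rw [cofaces_eq hpm.1 hσ hρ hss, Finset.card_image_of_injOn
      (Set.InjOn.mono (fun x hx => (Finset.mem_sdiff.mp hx).1) (Finset.erase_injOn σ)),
      Finset.card_sdiff_of_subset hss, (mem_faces'.mp hσ).2, (mem_faces'.mp hρ).2]
    omega
  · left
    rw [Finset.card_eq_zero, Finset.filter_eq_empty_iff]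
    intro τ hτ
    rw [Finset.mem_filter] at hτ
    exact fun hρτ => hss (hρτ.trans hτ.2)

lemma sum_cob (hpm : IsPseudomanifold X (m+2)) (ψ : Finset V → ZMod 2) :
    ∑ σ ∈ faces X (m+2), cob X (m+1) ψ σ = 0 := by
  simp only [cob]
  rw [Finset.sum_comm' (t' := faces X (m+1))
    (s' := fun τ => (faces X (m+2)).filter (fun σ => τ ⊆ σ)) ?hcomm]
  case hcomm =>
    intro σ τ
    simp only [Finset.mem_filter]
    tauto
  apply Finset.sum_eq_zero
  intro τ hτ
  rw [Finset.sum_const]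
  exact two_nsmul_zmod2 _ (Or.inr (hpm.2.2.1 τ hτ))

end Aux3
section Aux4
variable {V : Type*} [DecidableEq V] {X : Finset (Finset V)} {m : ℕ}
set_option linter.unusedSectionVars false

lemma zmod2_walk_alg : ∀ a b c : ZMod 2, (a + b) + (b + c) = a + c := by decide
lemma zmod2_path_alg : ∀ a b c : ZMod 2, (a + c) + (a + b) = b + c := by decide
lemma zmod2_ne_zero : ∀ x : ZMod 2, x ≠ 0 → x + 1 = 0 := by decide

lemma cnorm_indicator_le (k : ℕ) (τ : Finset V) :
    cnorm X k (fun ρ => if ρ = τ then 1 else 0) ≤ 1 := by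
  rw [cnorm, ← Finset.card_singleton τ]
  apply Finset.card_le_card
  intro ρ hρ
  rw [csupp, Finset.mem_filter] at hρ
  rcases hρ with ⟨-, hρ⟩
  rw [Finset.mem_singleton]
  by_contra hne
  exact hρ (if_neg hne)

lemma walk_cochain (hpm : IsPseudomanifold X (m+2))
    {u v : {σ : Finset V // σ ∈ faces X (m+2)}} (p : (flipGraph X (m+2)).Walk u v) :
    ∃ ψ : Finset V → ZMod 2,
      (∀ σ ∈ faces X (m+2), cob X (m+1) ψ σ =
        (if σ = u.1 then 1 else 0) + (if σ = v.1 then 1 else 0)) ∧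
      cnorm X (m+1) ψ ≤ p.length := by
  induction p with
  | nil =>
    refine ⟨fun _ => 0, fun σ _ => ?_, ?_⟩
    · rw [cob_zero, CharTwo.add_self_eq_zero]
    · simp [cnorm, csupp]
  | @cons u w v h q ih =>
    obtain ⟨ψq, hψq, hlen⟩ := ih
    have hne : u.1 ≠ w.1 := fun e => h.1 (Subtype.ext e)
    have hτf : (u.1 ∩ w.1) ∈ faces X (m+1) := (adj_face hpm u.2 w.2 hne h.2).1
    refine ⟨fun ρ => (if ρ = u.1 ∩ w.1 then 1 else 0) + ψq ρ, fun σ hσ => ?_, ?_⟩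
    · rw [cob_add, hψq σ hσ,
        cob_indicator hpm hτf hne u.2 w.2 Finset.inter_subset_left
          Finset.inter_subset_right hσ, zmod2_walk_alg]
    · calc cnorm X (m+1) (fun ρ => (if ρ = u.1 ∩ w.1 then 1 else 0) + ψq ρ)
          ≤ cnorm X (m+1) (fun ρ => if ρ = u.1 ∩ w.1 then 1 else 0) + cnorm X (m+1) ψq :=
            cnorm_add_le _ _ _
        _ ≤ 1 + q.length := Nat.add_le_add (cnorm_indicator_le _ _) hlen
        _ = (SimpleGraph.Walk.cons h q).length := by
            rw [SimpleGraph.Walk.length_cons]; omega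

lemma dist_le_cnorm (hpm : IsPseudomanifold X (m+2)) :
    ∀ (N : ℕ) (ψ : Finset V → ZMod 2) (u v : {σ : Finset V // σ ∈ faces X (m+2)}),
      cnorm X (m+1) ψ ≤ N →
      (∀ σ ∈ faces X (m+2), cob X (m+1) ψ σ =
        (if σ = u.1 then 1 else 0) + (if σ = v.1 then 1 else 0)) →
      (flipGraph X (m+2)).dist u v ≤ N := by
  intro N
  induction N with
  | zero =>
    intro ψ u v hnorm hcob
    by_cases huv : u = v
    · subst huv; simp [SimpleGraph.dist_self]
    · exfalso
      have hne : u.1 ≠ v.1 := fun e => huv (Subtype.ext e)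
      have h1 : cob X (m+1) ψ u.1 ≠ 0 := by
        rw [hcob u.1 u.2, if_pos rfl, if_neg hne, add_zero]; exact one_ne_zero
      obtain ⟨τ, hτmem, hτne⟩ := Finset.exists_ne_zero_of_sum_ne_zero h1
      rw [Finset.mem_filter] at hτmem
      have : τ ∈ csupp X (m+1) ψ := Finset.mem_filter.mpr ⟨hτmem.1, hτne⟩
      have := Finset.card_pos.mpr ⟨τ, this⟩
      rw [cnorm] at hnorm; omega
  | succ N IH =>
    intro ψ u v hnorm hcob
    by_cases huv : u = v
    · subst huv; simp [SimpleGraph.dist_self]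
    · have hne : u.1 ≠ v.1 := fun e => huv (Subtype.ext e)
      have h1 : cob X (m+1) ψ u.1 ≠ 0 := by
        rw [hcob u.1 u.2, if_pos rfl, if_neg hne, add_zero]; exact one_ne_zero
      obtain ⟨τ, hτmem, hτne⟩ := Finset.exists_ne_zero_of_sum_ne_zero h1
      rw [Finset.mem_filter] at hτmem
      obtain ⟨hτf, hτu⟩ := hτmem
      obtain ⟨σ₁, σ₂, hσ₁, hσ₂, hne12, hs1, hs2, huniq⟩ := coface_two hpm hτf
      -- the other coface w
      obtain ⟨w, hwface, hwne, hτw⟩ :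
          ∃ w : Finset V, w ∈ faces X (m+2) ∧ w ≠ u.1 ∧ τ ⊆ w := by
        rcases huniq u.1 u.2 hτu with rfl | rfl
        · exact ⟨σ₂, hσ₂, Ne.symm hne12, hs2⟩
        · exact ⟨σ₁, hσ₁, hne12, hs1⟩
      set wv : {σ : Finset V // σ ∈ faces X (m+2)} := ⟨w, hwface⟩ with hwv
      have hadj : (flipGraph X (m+2)).Adj u wv := by
        refine ⟨fun e => hwne (congrArg Subtype.val e).symm, ?_⟩
        exact (inter_card hτf (hwne.symm ∘ Eq.symm ∘ Eq.symm) u.2 hwface hτu hτw).2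
      -- replaced cochain
      set ψ' : Finset V → ZMod 2 := fun ρ => ψ ρ + (if ρ = τ then 1 else 0) with hψ'
      have hcob' : ∀ σ ∈ faces X (m+2), cob X (m+1) ψ' σ =
          (if σ = wv.1 then 1 else 0) + (if σ = v.1 then 1 else 0) := by
        intro σ hσ
        rw [hψ', cob_add, hcob σ hσ,
          cob_indicator hpm hτf (fun e => hwne e.symm) u.2 hwface hτu hτw hσ]
        exact zmod2_path_alg _ _ _
      have hsupp' : csupp X (m+1) ψ' = (csupp X (m+1) ψ).erase τ := by
        ext ρ
        rw [Finset.mem_erase, csupp, csupp, Finset.mem_filter, Finset.mem_filter]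
        have hval : ψ' ρ = ψ ρ + (if ρ = τ then 1 else 0) := rfl
        constructor
        · rintro ⟨hρf, hρne⟩
          rw [hval] at hρne
          by_cases e : ρ = τ
          · exfalso; subst e
            rw [if_pos rfl] at hρne
            exact hρne (zmod2_ne_zero _ hτne)
          · rw [if_neg e, add_zero] at hρne
            exact ⟨e, hρf, hρne⟩
        · rintro ⟨hρτ, hρf, hρne⟩
          refine ⟨hρf, ?_⟩
          rw [hval, if_neg hρτ, add_zero]
          exact hρne
      have hτsupp : τ ∈ csupp X (m+1) ψ := Finset.mem_filter.mpr ⟨hτf, hτne⟩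
      have hnorm' : cnorm X (m+1) ψ' ≤ N := by
        rw [cnorm, hsupp', Finset.card_erase_of_mem hτsupp]
        rw [cnorm] at hnorm; omega
      have hdw : (flipGraph X (m+2)).dist wv v ≤ N := IH ψ' wv v hnorm' hcob'
      calc (flipGraph X (m+2)).dist u v
          ≤ (flipGraph X (m+2)).dist u wv + (flipGraph X (m+2)).dist wv v :=
            (hpm.2.2.2).dist_triangle
        _ ≤ 1 + N := by
            have : (flipGraph X (m+2)).dist u wv = 1 :=
              SimpleGraph.dist_eq_one_iff_adj.mpr hadj
            omega
        _ = N + 1 := by omega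

end Aux4
section Aux5
variable {V : Type*} [DecidableEq V] [Fintype V] {X : Finset (Finset V)} {m : ℕ}
set_option linter.unusedSectionVars false

lemma zmod2_cancel_alg : ∀ a x y : ZMod 2, (x + y) + (a + (x + y)) = a := by decide
lemma zmod2_eq_one : ∀ x : ZMod 2, x ≠ 0 → x = 1 := by decide

lemma flip_ediam_ne_top (hpm : IsPseudomanifold X (m+2)) :
    (flipGraph X (m+2)).ediam ≠ ⊤ := by
  have hconn := hpm.2.2.2
  have : Nonempty {σ : Finset V // σ ∈ faces X (m+2)} := hconn.nonempty
  obtain ⟨u, v, h⟩ := SimpleGraph.exists_edist_eq_ediam_of_finite (G := flipGraph X (m+2))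
  rw [← h, SimpleGraph.edist_ne_top_iff_reachable]
  exact hconn u v

lemma even_cochain (hpm : IsPseudomanifold X (m+2)) :
    ∀ (M : ℕ) (α : Finset V → ZMod 2), (csupp X (m+2) α).card = 2 * M →
      ∃ ψ : Finset V → ZMod 2, (∀ σ ∈ faces X (m+2), cob X (m+1) ψ σ = α σ) ∧
        cnorm X (m+1) ψ ≤ M * (flipGraph X (m+2)).diam := by
  intro M
  induction M with
  | zero =>
    intro α hα
    refine ⟨fun _ => 0, fun σ hσ => ?_, by simp [cnorm, csupp]⟩
    rw [cob_zero]
    by_contra h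
    have hmem : σ ∈ csupp X (m+2) α := Finset.mem_filter.mpr ⟨hσ, fun e => h e.symm⟩
    rw [mul_zero, Finset.card_eq_zero] at hα
    rw [hα] at hmem
    exact absurd hmem (Finset.notMem_empty σ)
  | succ M IH =>
    intro α hα
    have hcard : 1 < (csupp X (m+2) α).card := by omega
    obtain ⟨u, hu, v, hv, huv⟩ := Finset.one_lt_card.mp hcard
    obtain ⟨huf, huα⟩ := Finset.mem_filter.mp hu
    obtain ⟨hvf, hvα⟩ := Finset.mem_filter.mp hv
    set uu : {σ : Finset V // σ ∈ faces X (m+2)} := ⟨u, huf⟩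
    set vv : {σ : Finset V // σ ∈ faces X (m+2)} := ⟨v, hvf⟩
    obtain ⟨p, hp⟩ := (hpm.2.2.2).exists_walk_length_eq_dist uu vv
    obtain ⟨ψ₁, hψ₁cob, hψ₁norm⟩ := walk_cochain hpm p
    have hψ₁diam : cnorm X (m+1) ψ₁ ≤ (flipGraph X (m+2)).diam := by
      refine le_trans hψ₁norm ?_
      rw [hp]
      exact SimpleGraph.dist_le_diam (flip_ediam_ne_top hpm)
    set α' : Finset V → ZMod 2 :=
      fun σ => α σ + ((if σ = u then 1 else 0) + (if σ = v then 1 else 0)) with hα'def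
    have hsupp' : csupp X (m+2) α' = ((csupp X (m+2) α).erase u).erase v := by
      ext σ
      rw [Finset.mem_erase, Finset.mem_erase, csupp, csupp,
        Finset.mem_filter, Finset.mem_filter]
      have hval : α' σ = α σ + ((if σ = u then 1 else 0) + (if σ = v then 1 else 0)) := rfl
      constructor
      · rintro ⟨hσf, hσne⟩
        rw [hval] at hσne
        by_cases e1 : σ = u
        · exfalso; subst e1
          rw [if_pos rfl, if_neg huv, add_zero, zmod2_eq_one _ huα] at hσne
          exact hσne (CharTwo.add_self_eq_zero 1)
        · by_cases e2 : σ = v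
          · exfalso; subst e2
            rw [if_neg e1, if_pos rfl, zero_add, zmod2_eq_one _ hvα] at hσne
            exact hσne (CharTwo.add_self_eq_zero 1)
          · rw [if_neg e1, if_neg e2, add_zero, add_zero] at hσne
            exact ⟨e2, e1, hσf, hσne⟩
      · rintro ⟨hσv, hσu, hσf, hσne⟩
        refine ⟨hσf, ?_⟩
        rw [hval, if_neg hσu, if_neg hσv, add_zero, add_zero]
        exact hσne
    have hcard' : (csupp X (m+2) α').card = 2 * M := by
      rw [hsupp', Finset.card_erase_of_mem, Finset.card_erase_of_mem hu, hα]
      · omega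
      · exact Finset.mem_erase.mpr ⟨fun e => huv e.symm, hv⟩
    obtain ⟨ψ₂, hψ₂cob, hψ₂norm⟩ := IH α' hcard'
    refine ⟨fun ρ => ψ₁ ρ + ψ₂ ρ, fun σ hσ => ?_, ?_⟩
    · rw [cob_add, hψ₁cob σ hσ, hψ₂cob σ hσ, hα'def]
      exact zmod2_cancel_alg _ _ _
    · calc cnorm X (m+1) (fun ρ => ψ₁ ρ + ψ₂ ρ)
          ≤ cnorm X (m+1) ψ₁ + cnorm X (m+1) ψ₂ := cnorm_add_le _ _ _
        _ ≤ (flipGraph X (m+2)).diam + M * (flipGraph X (m+2)).diam :=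
            Nat.add_le_add hψ₁diam hψ₂norm
        _ = (M + 1) * (flipGraph X (m+2)).diam := by ring

end Aux5
/-- For an `n`-pseudomanifold `X` with `H^{n-1}(X; ℤ/2) = 0`, the `(n-1)`-th Cheeger
constant equals `2 / diam(G_X)` where `G_X` is the flip graph of `X`. -/
theorem pseudomanifold_cheeger {V : Type*} [DecidableEq V] [Fintype V]
    (n : ℕ) (hn : 2 ≤ n) (X : Finset (Finset V))
    (hpm : IsPseudomanifold X n)
    (hcoh : ∀ φ : Finset V → ZMod 2,
      (∀ τ ∈ faces X n, cob X (n - 1) φ τ = 0) →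
      ∃ ψ : Finset V → ZMod 2, ∀ σ ∈ faces X (n - 1), φ σ = cob X (n - 2) ψ σ) :
    cheeger X (n - 1) = 2 / ((flipGraph X n).diam : ENNReal) := by
  obtain ⟨m, rfl⟩ : ∃ m, n = m + 2 := ⟨n - 2, by omega⟩
  clear hn
  have hconn : (flipGraph X (m+2)).Connected := hpm.2.2.2
  have hne_top : (flipGraph X (m+2)).ediam ≠ ⊤ := flip_ediam_ne_top hpm
  have hnonemp : Nonempty {σ : Finset V // σ ∈ faces X (m+2)} := hconn.nonempty
  have hnontriv : Nontrivial {σ : Finset V // σ ∈ faces X (m+2)} := by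
    obtain ⟨u⟩ := hnonemp
    have hcard : u.1.card = m + 3 := (mem_faces'.mp u.2).2
    obtain ⟨x, hx⟩ : u.1.Nonempty := by rw [← Finset.card_pos, hcard]; omega
    have hτ : u.1.erase x ∈ faces X (m+1) :=
      face_down hpm.1 u.2 (Finset.erase_subset x u.1)
        (by rw [Finset.card_erase_of_mem hx]; omega)
    obtain ⟨σ₁, σ₂, h1, h2, hne12, -, -, -⟩ := coface_two hpm hτ
    exact ⟨⟨σ₁, h1⟩, ⟨σ₂, h2⟩, fun e => hne12 (congrArg Subtype.val e)⟩
  have hdiam_pos : 0 < (flipGraph X (m+2)).diam := by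
    rw [Nat.pos_iff_ne_zero]
    intro h0
    rcases SimpleGraph.diam_eq_zero.mp h0 with h | h
    · exact hne_top h
    · exact (not_subsingleton _) h
  have hcosys : ∀ φ : Finset V → ZMod 2, cosys X (m+1) φ =
      sInf {k | ∃ ψ : Finset V → ZMod 2,
        k = cnorm X (m+1) fun τ => φ τ + cob X m ψ τ} := by
    intro φ
    rw [cosys, if_neg (Nat.succ_ne_zero m)]
    rfl
  show cheeger X (m+1) = 2 / ((flipGraph X (m+2)).diam : ENNReal)
  rw [cheeger]
  apply le_antisymm
  · -- upper bound: exhibit a cochain achieving 2/diam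
    obtain ⟨u, v, huv_dist⟩ := SimpleGraph.exists_dist_eq_diam (G := flipGraph X (m+2))
    have huv : u ≠ v := by
      intro e; subst e
      rw [SimpleGraph.dist_self] at huv_dist; omega
    have hne1 : u.1 ≠ v.1 := fun e => huv (Subtype.ext e)
    obtain ⟨p, hp⟩ := hconn.exists_walk_length_eq_dist u v
    obtain ⟨φ₀, hφ₀cob, hφ₀norm⟩ := walk_cochain hpm p
    have hcosys_le : cosys X (m+1) φ₀ ≤ (flipGraph X (m+2)).diam := by
      rw [hcosys]
      have hmem : cnorm X (m+1) φ₀ ∈ {k | ∃ ψ : Finset V → ZMod 2,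
          k = cnorm X (m+1) fun τ => φ₀ τ + cob X m ψ τ} :=
        ⟨fun _ => 0, cnorm_congr _ (fun σ _ => by rw [cob_zero, add_zero])⟩
      refine le_trans (Nat.sInf_le hmem) (le_trans hφ₀norm ?_)
      rw [hp]
      exact SimpleGraph.dist_le_diam hne_top
    have hcosys_ge : (flipGraph X (m+2)).diam ≤ cosys X (m+1) φ₀ := by
      rw [hcosys]
      refine le_csInf ⟨cnorm X (m+1) (fun τ => φ₀ τ + cob X m (fun _ => (0:ZMod 2)) τ),
        ⟨fun _ => 0, rfl⟩⟩ ?_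
      rintro b ⟨ψ, rfl⟩
      rw [← huv_dist]
      apply dist_le_cnorm hpm _ _ u v le_rfl
      intro σ hσ
      rw [cob_add (m+1) φ₀ (cob X m ψ) σ, hφ₀cob σ hσ, cob_cob hpm ψ hσ, add_zero]
    have hcosys_eq : cosys X (m+1) φ₀ = (flipGraph X (m+2)).diam :=
      le_antisymm hcosys_le hcosys_ge
    have hcnorm2 : cnorm X (m+2) (cob X (m+1) φ₀) = 2 := by
      have hsupp : csupp X (m+2) (cob X (m+1) φ₀) = {u.1, v.1} := by
        ext σ
        rw [csupp, Finset.mem_filter, Finset.mem_insert, Finset.mem_singleton]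
        constructor
        · rintro ⟨hσf, hσne⟩
          rw [hφ₀cob σ hσf] at hσne
          by_contra hcon
          push_neg at hcon
          rw [if_neg hcon.1, if_neg hcon.2, add_zero] at hσne
          exact hσne rfl
        · rintro (rfl | rfl)
          · refine ⟨u.2, ?_⟩
            rw [hφ₀cob _ u.2, if_pos rfl, if_neg hne1, add_zero]
            exact one_ne_zero
          · refine ⟨v.2, ?_⟩
            rw [hφ₀cob _ v.2, if_neg (fun e => hne1 e.symm), if_pos rfl, zero_add]
            exact one_ne_zero
      rw [cnorm, hsupp, Finset.card_insert_of_notMem (by simpa using hne1),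
        Finset.card_singleton]
    apply sInf_le
    refine ⟨φ₀, by rw [hcosys_eq]; exact hdiam_pos, ?_⟩
    rw [show ((m+1) + 1) = m + 2 from rfl, hcnorm2, hcosys_eq]
    norm_num
  · -- lower bound
    apply le_sInf
    rintro r ⟨φ, hpos, rfl⟩
    set S := csupp X (m+2) (cob X (m+1) φ) with hS
    have hcast : ((S.card : ZMod 2)) = 0 := by
      have h1 : ∑ σ ∈ S, cob X (m+1) φ σ = ∑ σ ∈ faces X (m+2), cob X (m+1) φ σ :=
        Finset.sum_subset (Finset.filter_subset _ _) (fun σ hσ hnot => by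
          by_contra hc
          exact hnot (Finset.mem_filter.mpr ⟨hσ, hc⟩))
      have h2 : ∑ σ ∈ S, cob X (m+1) φ σ = ∑ σ ∈ S, (1 : ZMod 2) :=
        Finset.sum_congr rfl (fun σ hσ => zmod2_eq_one _ (Finset.mem_filter.mp hσ).2)
      calc (S.card : ZMod 2) = S.card • (1 : ZMod 2) := (nsmul_one _).symm
        _ = ∑ _σ ∈ S, (1 : ZMod 2) := (Finset.sum_const 1).symm
        _ = 0 := by rw [← h2, h1, sum_cob hpm φ]
    obtain ⟨M, hM⟩ : ∃ M, S.card = 2 * M :=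
      (ZMod.natCast_eq_zero_iff _ 2).mp hcast
    have hSne : S.Nonempty := by
      rw [Finset.nonempty_iff_ne_empty]
      intro hempty
      have hzero : ∀ τ ∈ faces X (m+2), cob X (m+1) φ τ = 0 := by
        intro τ hτ
        by_contra hc
        have : τ ∈ S := Finset.mem_filter.mpr ⟨hτ, hc⟩
        rw [hempty] at this
        exact absurd this (Finset.notMem_empty τ)
      obtain ⟨ψ, hψ⟩ := hcoh φ hzero
      have h0 : cosys X (m+1) φ = 0 := by
        rw [hcosys]
        refine Nat.le_antisymm (Nat.sInf_le ⟨ψ, ?_⟩) (Nat.zero_le _)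
        symm
        rw [cnorm, Finset.card_eq_zero, csupp, Finset.filter_eq_empty_iff]
        intro τ hτ
        have hψ' : φ τ = cob X m ψ τ := hψ τ hτ
        rw [not_not, ← hψ', CharTwo.add_self_eq_zero]
      omega
    have hM1 : 1 ≤ M := by
      have := Finset.card_pos.mpr hSne
      omega
    obtain ⟨ψ, hψcob, hψnorm⟩ := even_cochain hpm M (cob X (m+1) φ) hM
    have hcosys_le : cosys X (m+1) φ ≤ M * (flipGraph X (m+2)).diam := by
      have hzero : ∀ τ ∈ faces X (m+2), cob X (m+1) (fun ρ => φ ρ + ψ ρ) τ = 0 := by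
        intro τ hτ
        rw [cob_add, hψcob τ hτ, CharTwo.add_self_eq_zero]
      obtain ⟨ψ₀, hψ₀⟩ := hcoh (fun ρ => φ ρ + ψ ρ) hzero
      rw [hcosys]
      refine le_trans (Nat.sInf_le ⟨ψ₀, ?_⟩) hψnorm
      apply cnorm_congr
      intro σ hσ
      have hv : (fun ρ => φ ρ + ψ ρ) σ = cob X m ψ₀ σ := hψ₀ σ hσ
      simp only at hv
      rw [← hv]
      have : ∀ a b : ZMod 2, b = a + (a + b) := by decide
      exact this (φ σ) (ψ σ)
    have hcnorm : cnorm X (m+2) (cob X (m+1) φ) = 2 * M := hM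
    rw [show ((m+1) + 1) = m + 2 from rfl, hcnorm]
    have hle : (cosys X (m+1) φ : ENNReal) ≤ (M : ENNReal) * ((flipGraph X (m+2)).diam : ENNReal) := by
      calc (cosys X (m+1) φ : ENNReal) ≤ ((M * (flipGraph X (m+2)).diam : ℕ) : ENNReal) :=
            Nat.cast_le.mpr hcosys_le
        _ = (M : ENNReal) * ((flipGraph X (m+2)).diam : ENNReal) := by push_cast; ring
    calc (2 : ENNReal) / ((flipGraph X (m+2)).diam : ENNReal)
        = ((M : ENNReal) * 2) / ((M : ENNReal) * ((flipGraph X (m+2)).diam : ENNReal)) := by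
          rw [ENNReal.mul_div_mul_left _ _ (by exact_mod_cast Nat.pos_iff_ne_zero.mp hM1)
            (ENNReal.natCast_ne_top M)]
      _ ≤ ((M : ENNReal) * 2) / ((cosys X (m+1) φ : ℕ) : ENNReal) :=
          ENNReal.div_le_div_left hle _
      _ = (((2 * M : ℕ)) : ENNReal) / ((cosys X (m+1) φ : ℕ) : ENNReal) := by
          push_cast; ring_nf
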